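/- Let μ be the Lebesgue measure on ℝ³ restricted to a measurable transmit aperture 𝒜, H_1,…,H_K ∈ L²(μ,ℂ), A_k > 0, σ_k > 0, P_max > 0, and define SE(V) = ∑_{k=1}^K log₂(1 + A_k·|∫ H_k·V_k dμ|² / (∑_{j≠k} A_j·|∫ H_k·V_j dμ|² + σ_k²)) for V ∈ (L²(μ,ℂ))^K. Suppose V = (V_1,…,V_K) satisfies ∑_k ‖V_k‖²_{L²} = P_max, and for some index k₀ there is a decomposition V_{k₀} = W + U in L²(μ,ℂ) with ⟪U, conj(H_j)⟫_{L²} = 0 for all j, ⟪W, U⟫_{L²} = 0, and ‖U‖_{L²} > 0. If moreover there exists j with ∫ H_j·V_j dμ ≠ 0, then there exists V' = (V'_1,…,V'_K) with ∑_k ‖V'_k‖²_{L²} = P_max and SE(V') > SE(V); in particular V is not a maximizer of SE over the feasible set. -/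

import Mathlib

open MeasureTheory Complex
open scoped ENNReal

section Helpers
variable {α : Type*} [MeasurableSpace α] {μ : Measure α}

lemma aux_integrable_mul {𝕜 : Type*} [RCLike 𝕜] {f g : α → 𝕜}
    (hf : MemLp f 2 μ) (hg : MemLp g 2 μ) :
    Integrable (fun r => f r * g r) μ := by
  have h : (1 : ℝ≥0∞) / 1 = 1 / 2 + 1 / 2 := by
    rw [ENNReal.add_halves, one_div_one]
  have := (hg.smul hf (r := 1) : MemLp (f • g) 1 μ)
  rw [memLp_one_iff_integrable] at this
  exact this

lemma aux_sq_integrable {f : α → ℂ} (hf : MemLp f 2 μ) :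
    Integrable (fun r => ‖f r‖ ^ 2) μ := by
  have := aux_integrable_mul hf.norm hf.norm
  simpa [sq] using this

lemma aux_conj_memℒp {f : α → ℂ} (hf : MemLp f 2 μ) :
    MemLp (fun r => (starRingEnd ℂ) (f r)) 2 μ := by
  refine hf.of_le ?_ (Filter.Eventually.of_forall fun x => by simp)
  exact (continuous_star.comp_aestronglyMeasurable hf.1 : _)

lemma aux_norm_add_sq (a b : ℂ) :
    ‖a + b‖ ^ 2 = ‖a‖ ^ 2 + ‖b‖ ^ 2 + 2 * ((starRingEnd ℂ) a * b).re := by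
  have h := Complex.normSq_add a b
  have h2 : a * (starRingEnd ℂ) b = (starRingEnd ℂ) ((starRingEnd ℂ) a * b) := by
    simp [map_mul, mul_comm]
  rw [Complex.sq_norm, Complex.sq_norm, Complex.sq_norm, h, h2, Complex.conj_re]

lemma aux_ae_zero {f : α → ℂ} (hf : MemLp f 2 μ) (h : ¬ 0 < ∫ r, ‖f r‖ ^ 2 ∂μ) :
    f =ᵐ[μ] 0 := by
  have h0 : ∫ r, ‖f r‖ ^ 2 ∂μ = 0 :=
    le_antisymm (not_lt.mp h) (integral_nonneg fun r => sq_nonneg _)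
  have := (integral_eq_zero_iff_of_nonneg (fun r => sq_nonneg _) (aux_sq_integrable hf)).mp h0
  filter_upwards [this] with x hx
  have : ‖f x‖ ^ 2 = 0 := hx
  simpa [pow_eq_zero_iff, norm_eq_zero] using this

lemma aux_sinr_le {t a I s2 : ℝ} (ht : 1 < t) (ha : 0 ≤ a) (hI : 0 ≤ I) (hs : 0 < s2) :
    a / (I + s2) ≤ t * a / (t * I + s2) := by
  have h1 : 0 < I + s2 := by linarith
  have h2 : 0 < t * I + s2 := by nlinarith
  rw [div_le_div_iff₀ h1 h2]
  nlinarith [mul_nonneg (mul_nonneg ha hs.le) (sub_nonneg.mpr ht.le)]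

lemma aux_sinr_lt {t a I s2 : ℝ} (ht : 1 < t) (ha : 0 < a) (hI : 0 ≤ I) (hs : 0 < s2) :
    a / (I + s2) < t * a / (t * I + s2) := by
  have h1 : 0 < I + s2 := by linarith
  have h2 : 0 < t * I + s2 := by nlinarith
  rw [div_lt_div_iff₀ h1 h2]
  nlinarith [mul_pos (mul_pos ha hs) (sub_pos.mpr ht)]

end Helpers

theorem beamformer_with_orthogonal_component_not_optimal
    {K : ℕ} (hK : 1 ≤ K)
    (𝒜 : Set (Fin 3 → ℝ)) (h𝒜 : MeasurableSet 𝒜)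
    (μ : Measure (Fin 3 → ℝ)) (hμ : μ = volume.restrict 𝒜)
    (H : Fin K → (Fin 3 → ℝ) → ℂ) (hH : ∀ k, MemLp (H k) 2 μ)
    (A σ : Fin K → ℝ) (hA : ∀ k, 0 < A k) (hσ : ∀ k, 0 < σ k)
    (Pmax : ℝ) (hPmax : 0 < Pmax)
    (SE P : (Fin K → (Fin 3 → ℝ) → ℂ) → ℝ)
    (hSE : ∀ V, SE V = ∑ k, Real.logb 2
      (1 + A k * ‖∫ r, H k r * V k r ∂μ‖ ^ 2 /
        ((∑ j ∈ Finset.univ.erase k, A j * ‖∫ r, H k r * V j r ∂μ‖ ^ 2) + σ k ^ 2)))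
    (hP : ∀ V, P V = ∑ k, ∫ r, ‖V k r‖ ^ 2 ∂μ)
    (V : Fin K → (Fin 3 → ℝ) → ℂ) (hV : ∀ k, MemLp (V k) 2 μ)
    (hfeas : P V = Pmax)
    (k₀ : Fin K) (W U : (Fin 3 → ℝ) → ℂ)
    (hW : MemLp W 2 μ) (hU : MemLp U 2 μ)
    (hdecomp : V k₀ =ᵐ[μ] fun r => W r + U r)
    (hUperpH : ∀ j, (∫ r, (starRingEnd ℂ) (U r) * (starRingEnd ℂ) (H j r) ∂μ) = 0)
    (hWperpU : (∫ r, (starRingEnd ℂ) (W r) * U r ∂μ) = 0)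
    (hUnonzero : 0 < ∫ r, ‖U r‖ ^ 2 ∂μ)
    (hsig : ∃ j, (∫ r, H j r * V j r ∂μ) ≠ 0) :
    ∃ V' : Fin K → (Fin 3 → ℝ) → ℂ,
      (∀ k, MemLp (V' k) 2 μ) ∧ P V' = Pmax ∧ SE V < SE V' := by
  classical
  obtain ⟨j₀, hj₀⟩ := hsig
  -- U is orthogonal to every channel
  have hHU : ∀ k, (∫ r, H k r * U r ∂μ) = 0 := by
    intro k
    have h1 : (starRingEnd ℂ) (∫ r, H k r * U r ∂μ) = 0 := by
      rw [← integral_conj, ← hUperpH k]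
      refine integral_congr_ae (Filter.Eventually.of_forall fun r => ?_)
      simp [map_mul]; ring
    have := congrArg (starRingEnd ℂ) h1
    simpa using this
  -- W has the same signal as V k₀
  have hHW : ∀ k, (∫ r, H k r * W r ∂μ) = ∫ r, H k r * V k₀ r ∂μ := by
    intro k
    have hcongr : (∫ r, H k r * V k₀ r ∂μ) = ∫ r, H k r * (W r + U r) ∂μ :=
      integral_congr_ae (hdecomp.mono fun r hr => by dsimp only; rw [hr])
    have hadd : (∫ r, H k r * (W r + U r) ∂μ)
        = (∫ r, H k r * W r ∂μ) + ∫ r, H k r * U r ∂μ := by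
      simp_rw [mul_add]
      exact integral_add (aux_integrable_mul (hH k) hW) (aux_integrable_mul (hH k) hU)
    rw [hcongr, hadd, hHU k, add_zero]
  -- Pythagoras
  have hWU : Integrable (fun r => (starRingEnd ℂ) (W r) * U r) μ :=
    aux_integrable_mul (aux_conj_memℒp hW) hU
  have h3 : (∫ r, ((starRingEnd ℂ) (W r) * U r).re ∂μ) = 0 := by
    have h := integral_re hWU
    simp only [RCLike.re_to_complex] at h
    rw [h, hWperpU]
    simp
  have hsplit : (∫ r, ‖V k₀ r‖ ^ 2 ∂μ)
      = (∫ r, ‖W r‖ ^ 2 ∂μ) + ∫ r, ‖U r‖ ^ 2 ∂μ := by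
    have h1 : (∫ r, ‖V k₀ r‖ ^ 2 ∂μ) = ∫ r, ‖W r + U r‖ ^ 2 ∂μ :=
      integral_congr_ae (hdecomp.mono fun r hr => by dsimp only; rw [hr])
    have hre : Integrable (fun r => ((starRingEnd ℂ) (W r) * U r).re) μ := by
      simpa [RCLike.re_to_complex] using hWU.re
    have hadd1 : Integrable (fun r => ‖W r‖ ^ 2 + ‖U r‖ ^ 2) μ :=
      (aux_sq_integrable hW).add (aux_sq_integrable hU)
    have hadd2 : Integrable (fun r => 2 * ((starRingEnd ℂ) (W r) * U r).re) μ :=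
      hre.const_mul 2
    rw [h1]
    simp_rw [aux_norm_add_sq]
    rw [integral_add hadd1 hadd2,
      integral_add (aux_sq_integrable hW) (aux_sq_integrable hU),
      integral_const_mul, h3]
    ring
  -- bookkeeping
  set IW := ∫ r, ‖W r‖ ^ 2 ∂μ with hIWdef
  set IU := ∫ r, ‖U r‖ ^ 2 ∂μ with hIUdef
  set Srest := ∑ j ∈ Finset.univ.erase k₀, ∫ r, ‖V j r‖ ^ 2 ∂μ with hSrestdef
  have hsum : (∫ r, ‖V k₀ r‖ ^ 2 ∂μ) + Srest = Pmax := by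
    rw [← hfeas, hP]
    exact Finset.add_sum_erase _ (fun k => ∫ r, ‖V k r‖ ^ 2 ∂μ) (Finset.mem_univ k₀)
  set T := IW + Srest with hTdef
  have hPsplit : Pmax = T + IU := by rw [hTdef]; linarith [hsplit, hsum]
  have hIW0 : 0 ≤ IW := integral_nonneg fun r => sq_nonneg _
  have hSrest0 : 0 ≤ Srest :=
    Finset.sum_nonneg fun j _ => integral_nonneg fun r => sq_nonneg _
  have hT_pos : 0 < T := by
    by_cases hj : j₀ = k₀
    · subst hj
      have hIWpos : 0 < IW := by
        by_contra hIW
        have hW0 : W =ᵐ[μ] 0 := aux_ae_zero hW hIW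
        have : (∫ r, H j₀ r * W r ∂μ) = 0 := by
          have h0 : (fun r => H j₀ r * W r) =ᵐ[μ] 0 :=
            hW0.mono fun r hr => by simp [hr]
          rw [integral_congr_ae h0]; simp
        exact hj₀ (by rw [← hHW j₀, this])
      linarith
    · have hVpos : 0 < ∫ r, ‖V j₀ r‖ ^ 2 ∂μ := by
        by_contra hVj
        have hV0 : V j₀ =ᵐ[μ] 0 := aux_ae_zero (hV j₀) hVj
        have : (∫ r, H j₀ r * V j₀ r ∂μ) = 0 := by
          have h0 : (fun r => H j₀ r * V j₀ r) =ᵐ[μ] 0 :=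
            hV0.mono fun r hr => by simp [hr]
          rw [integral_congr_ae h0]; simp
        exact hj₀ this
      have hmem : j₀ ∈ Finset.univ.erase k₀ :=
        Finset.mem_erase.mpr ⟨hj, Finset.mem_univ j₀⟩
      have := Finset.single_le_sum
        (f := fun j => ∫ r, ‖V j r‖ ^ 2 ∂μ)
        (fun j _ => integral_nonneg fun r => sq_nonneg _) hmem
      linarith
  have hT_lt : T < Pmax := by linarith
  set t := Pmax / T with htdef
  have ht1 : 1 < t := (one_lt_div hT_pos).mpr hT_lt
  set c := Real.sqrt t with hcdef
  have hc0 : 0 < c := Real.sqrt_pos.mpr (by linarith)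
  have hc2 : c ^ 2 = t := Real.sq_sqrt (by linarith)
  -- the improved beamformers
  refine ⟨fun k r => (c : ℂ) * (if k = k₀ then W r else V k r), ?_, ?_, ?_⟩
  · intro k
    by_cases hk : k = k₀
    · simpa [hk] using hW.const_mul (c : ℂ)
    · simpa [hk] using (hV k).const_mul (c : ℂ)
  · -- power constraint
    rw [hP]
    have hnormsq : ∀ z : ℂ, ‖(c : ℂ) * z‖ ^ 2 = c ^ 2 * ‖z‖ ^ 2 := fun z => by
      rw [norm_mul, mul_pow, Complex.norm_real, Real.norm_eq_abs, _root_.sq_abs]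
    have hterm : ∀ k, (∫ r, ‖(c : ℂ) * (if k = k₀ then W r else V k r)‖ ^ 2 ∂μ)
        = c ^ 2 * ∫ r, ‖(if k = k₀ then W r else V k r)‖ ^ 2 ∂μ := by
      intro k
      simp_rw [hnormsq]
      exact integral_const_mul _ _
    simp_rw [hterm]
    rw [← Finset.mul_sum]
    have hsum2 : (∑ k, ∫ r, ‖(if k = k₀ then W r else V k r)‖ ^ 2 ∂μ) = T := by
      rw [← Finset.add_sum_erase _ _ (Finset.mem_univ k₀)]
      simp only [if_pos rfl]
      rw [hTdef, hIWdef, hSrestdef]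
      congr 1
      refine Finset.sum_congr rfl fun j hj => ?_
      simp only [if_neg (Finset.mem_erase.mp hj).1]
    rw [hsum2, hc2, htdef, div_mul_cancel₀ _ hT_pos.ne']
  · -- spectral efficiency strictly improves
    have hint : ∀ k j, (∫ r, H k r * ((c : ℂ) * (if j = k₀ then W r else V j r)) ∂μ)
        = (c : ℂ) * ∫ r, H k r * V j r ∂μ := by
      intro k j
      have key : ∀ g : (Fin 3 → ℝ) → ℂ, MemLp g 2 μ →
          (∫ r, H k r * ((c : ℂ) * g r) ∂μ) = (c : ℂ) * ∫ r, H k r * g r ∂μ := by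
        intro g _
        calc (∫ r, H k r * ((c : ℂ) * g r) ∂μ)
            = ∫ r, (c : ℂ) * (H k r * g r) ∂μ := by
              refine integral_congr_ae (Filter.Eventually.of_forall fun r => ?_); ring
          _ = (c : ℂ) * ∫ r, H k r * g r ∂μ := integral_const_mul _ _
      by_cases hj : j = k₀
      · simp only [hj, if_pos]
        rw [key W hW, hHW k]
      · simp only [if_neg hj]
        exact key (V j) (hV j)
    rw [hSE, hSE]
    have hnormsq : ∀ z : ℂ, ‖(c : ℂ) * z‖ ^ 2 = c ^ 2 * ‖z‖ ^ 2 := fun z => by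
      rw [norm_mul, mul_pow, Complex.norm_real, Real.norm_eq_abs, _root_.sq_abs]
    refine Finset.sum_lt_sum (fun k _ => ?_) ⟨j₀, Finset.mem_univ j₀, ?_⟩
    · -- ≤ for every k
      have hS0 : 0 ≤ A k * ‖∫ r, H k r * V k r ∂μ‖ ^ 2 :=
        mul_nonneg (hA k).le (sq_nonneg _)
      have hI0 : 0 ≤ ∑ j ∈ Finset.univ.erase k, A j * ‖∫ r, H k r * V j r ∂μ‖ ^ 2 :=
        Finset.sum_nonneg fun j _ => mul_nonneg (hA j).le (sq_nonneg _)
      have hσ2 : 0 < σ k ^ 2 := pow_pos (hσ k) 2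
      have hrw : (1 : ℝ) + A k * ‖∫ r, H k r * ((c : ℂ) * (if k = k₀ then W r else V k r)) ∂μ‖ ^ 2 /
          ((∑ j ∈ Finset.univ.erase k, A j * ‖∫ r, H k r * ((c : ℂ) * (if j = k₀ then W r else V j r)) ∂μ‖ ^ 2) + σ k ^ 2)
          = 1 + (c ^ 2 * (A k * ‖∫ r, H k r * V k r ∂μ‖ ^ 2)) /
            (c ^ 2 * (∑ j ∈ Finset.univ.erase k, A j * ‖∫ r, H k r * V j r ∂μ‖ ^ 2) + σ k ^ 2) := by
        rw [hint k k, hnormsq]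
        congr 2
        · ring
        · congr 1
          rw [Finset.mul_sum]
          refine Finset.sum_congr rfl fun j _ => ?_
          rw [hint k j, hnormsq]
          ring
      rw [hrw]
      have hle := aux_sinr_le (t := c ^ 2)
        (a := A k * ‖∫ r, H k r * V k r ∂μ‖ ^ 2)
        (I := ∑ j ∈ Finset.univ.erase k, A j * ‖∫ r, H k r * V j r ∂μ‖ ^ 2)
        (s2 := σ k ^ 2) (by rw [hc2]; exact ht1) hS0 hI0 hσ2
      have hpos : (0 : ℝ) < 1 + A k * ‖∫ r, H k r * V k r ∂μ‖ ^ 2 /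
          ((∑ j ∈ Finset.univ.erase k, A j * ‖∫ r, H k r * V j r ∂μ‖ ^ 2) + σ k ^ 2) := by
        have : 0 ≤ A k * ‖∫ r, H k r * V k r ∂μ‖ ^ 2 /
            ((∑ j ∈ Finset.univ.erase k, A j * ‖∫ r, H k r * V j r ∂μ‖ ^ 2) + σ k ^ 2) :=
          div_nonneg hS0 (by linarith)
        linarith
      exact Real.logb_le_logb_of_le one_lt_two hpos (by linarith)
    · -- strict at j₀
      have hS0 : 0 < A j₀ * ‖∫ r, H j₀ r * V j₀ r ∂μ‖ ^ 2 :=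
        mul_pos (hA j₀) (pow_pos (norm_pos_iff.mpr hj₀) 2)
      have hI0 : 0 ≤ ∑ j ∈ Finset.univ.erase j₀, A j * ‖∫ r, H j₀ r * V j r ∂μ‖ ^ 2 :=
        Finset.sum_nonneg fun j _ => mul_nonneg (hA j).le (sq_nonneg _)
      have hσ2 : 0 < σ j₀ ^ 2 := pow_pos (hσ j₀) 2
      have hrw : (1 : ℝ) + A j₀ * ‖∫ r, H j₀ r * ((c : ℂ) * (if j₀ = k₀ then W r else V j₀ r)) ∂μ‖ ^ 2 /
          ((∑ j ∈ Finset.univ.erase j₀, A j * ‖∫ r, H j₀ r * ((c : ℂ) * (if j = k₀ then W r else V j r)) ∂μ‖ ^ 2) + σ j₀ ^ 2)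
          = 1 + (c ^ 2 * (A j₀ * ‖∫ r, H j₀ r * V j₀ r ∂μ‖ ^ 2)) /
            (c ^ 2 * (∑ j ∈ Finset.univ.erase j₀, A j * ‖∫ r, H j₀ r * V j r ∂μ‖ ^ 2) + σ j₀ ^ 2) := by
        rw [hint j₀ j₀, hnormsq]
        congr 2
        · ring
        · congr 1
          rw [Finset.mul_sum]
          refine Finset.sum_congr rfl fun j _ => ?_
          rw [hint j₀ j, hnormsq]
          ring
      rw [hrw]
      have hlt := aux_sinr_lt (t := c ^ 2)
        (a := A j₀ * ‖∫ r, H j₀ r * V j₀ r ∂μ‖ ^ 2)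
        (I := ∑ j ∈ Finset.univ.erase j₀, A j * ‖∫ r, H j₀ r * V j r ∂μ‖ ^ 2)
        (s2 := σ j₀ ^ 2) (by rw [hc2]; exact ht1) hS0 hI0 hσ2
      have hpos : (0 : ℝ) < 1 + A j₀ * ‖∫ r, H j₀ r * V j₀ r ∂μ‖ ^ 2 /
          ((∑ j ∈ Finset.univ.erase j₀, A j * ‖∫ r, H j₀ r * V j r ∂μ‖ ^ 2) + σ j₀ ^ 2) := by
        have : 0 ≤ A j₀ * ‖∫ r, H j₀ r * V j₀ r ∂μ‖ ^ 2 /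
            ((∑ j ∈ Finset.univ.erase j₀, A j * ‖∫ r, H j₀ r * V j r ∂μ‖ ^ 2) + σ j₀ ^ 2) :=
          div_nonneg hS0.le (by linarith)
        linarith
      exact Real.logb_lt_logb one_lt_two hpos (by linarith)
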